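/- If a bounded linear operator R on H satisfies w²Rw*² + q²R = (1+q²)·wRw*, then wRw* = R, i.e. R commutes with w. In other words, the only bounded solutions of this operator equation are the bounded operators commuting with w. -/
import Mathlib


/-- Section 5 of the paper: the only bounded solutions of the operator equation
`w²Rw*² + q²R = (1+q²) wRw*` (equation (4-42)), with `w` unitary on a complex Hilbert
space, are the bounded operators commuting with `w`, i.e. `wRw* = R`. -/
theorem bounded_solutions_commute (q : ℝ) (hq0 : 0 < q) (hq1 : q < 1)
    (H : Type*) [NormedAddCommGroup H] [InnerProductSpace ℂ H] [CompleteSpace H]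
    (w R : H →L[ℂ] H)
    (hw1 : w ∘L ContinuousLinearMap.adjoint w = 1)
    (hw2 : ContinuousLinearMap.adjoint w ∘L w = 1)
    (hR : w ∘L w ∘L R ∘L ContinuousLinearMap.adjoint w ∘L ContinuousLinearMap.adjoint w
        + ((q ^ 2 : ℝ) : ℂ) • R
        = ((1 + q ^ 2 : ℝ) : ℂ) • (w ∘L R ∘L ContinuousLinearMap.adjoint w)) :
    w ∘L R ∘L ContinuousLinearMap.adjoint w = R ∧ w ∘L R = R ∘L w := by
  set w' := ContinuousLinearMap.adjoint w with hw'
  have hwa : ∀ x : H, w' (w x) = x := by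
    intro x
    have := ContinuousLinearMap.ext_iff.mp hw2 x
    simpa using this
  -- norms of w and w' are ≤ 1
  have hone : ‖(1 : H →L[ℂ] H)‖ ≤ 1 := by
    rw [ContinuousLinearMap.one_def]; exact ContinuousLinearMap.norm_id_le
  have hnw : ‖w‖ ≤ 1 := by
    have h := ContinuousLinearMap.norm_adjoint_comp_self w
    rw [← hw', hw2] at h
    nlinarith [norm_nonneg w]
  have hnw' : ‖w'‖ ≤ 1 := by
    rw [hw', LinearIsometryEquiv.norm_map ContinuousLinearMap.adjoint w]; exact hnw
  set S : H →L[ℂ] H := w ∘L R ∘L w' - R with hS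
  -- key algebraic identity: w S w' = q² • S
  have key : w ∘L S ∘L w' = ((q ^ 2 : ℝ) : ℂ) • S := by
    have h1 : w ∘L S ∘L w' = w ∘L w ∘L R ∘L w' ∘L w' - w ∘L R ∘L w' := by
      simp only [hS, ContinuousLinearMap.comp_sub, ContinuousLinearMap.sub_comp,
        ContinuousLinearMap.comp_assoc]
    have h2 : w ∘L w ∘L R ∘L w' ∘L w'
        = ((1 + q ^ 2 : ℝ) : ℂ) • (w ∘L R ∘L w') - ((q ^ 2 : ℝ) : ℂ) • R := by
      rw [eq_sub_iff_add_eq]; exact hR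
    rw [h1, h2, hS]
    push_cast
    module
  -- recover S from its conjugate
  have hLHS : w' ∘L (w ∘L S ∘L w') ∘L w = S := by
    ext x; simp [hwa]
  have hrec : S = ((q ^ 2 : ℝ) : ℂ) • (w' ∘L S ∘L w) := by
    conv_lhs => rw [← hLHS, key]
    ext x; simp
  -- norm estimate forces S = 0
  have hb : ‖w' ∘L S ∘L w‖ ≤ ‖S‖ := by
    have a := ContinuousLinearMap.opNorm_comp_le w' (S ∘L w)
    have b := ContinuousLinearMap.opNorm_comp_le S w
    nlinarith [norm_nonneg (S ∘L w), norm_nonneg S, norm_nonneg w, norm_nonneg w']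
  have hnorm : ‖S‖ ≤ q ^ 2 * ‖S‖ := by
    calc ‖S‖ = ‖((q ^ 2 : ℝ) : ℂ) • (w' ∘L S ∘L w)‖ := by rw [← hrec]
    _ = q ^ 2 * ‖w' ∘L S ∘L w‖ := by
        rw [norm_smul, Complex.norm_real, Real.norm_eq_abs, abs_of_pos (by positivity)]
    _ ≤ q ^ 2 * ‖S‖ := by
        have : (0:ℝ) ≤ q ^ 2 := by positivity
        exact mul_le_mul_of_nonneg_left hb this
  have hS0 : S = 0 := by
    by_contra h
    have hSpos : 0 < ‖S‖ := norm_pos_iff.mpr h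
    have hq2 : q ^ 2 < 1 := by nlinarith
    nlinarith
  have hcomm : w ∘L R ∘L w' = R := sub_eq_zero.mp hS0
  refine ⟨hcomm, ?_⟩
  calc w ∘L R = (w ∘L R ∘L w') ∘L w := by ext x; simp [hwa]
  _ = R ∘L w := by rw [hcomm]
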